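/- Let ξ₁, …, ξₙ be mutually independent real-valued random variables with E[ξᵢ] = 0 and E[|ξᵢ|^α] < ∞ for some 1 ≤ α ≤ 2. Then E[|ξ₁ + ⋯ + ξₙ|^α] ≤ 2^α (E[|ξ₁|^α] + ⋯ + E[|ξₙ|^α]). -/

import Mathlib

open MeasureTheory ProbabilityTheory Real Filter

noncomputable def vbeG (α x : ℝ) : ℝ := Real.sign x * |x| ^ (α - 1)

lemma cont_abs_rpow {β : ℝ} (hβ : 0 ≤ β) : Continuous (fun u : ℝ => |u| ^ β) :=
  continuous_abs.rpow_const (fun _ => Or.inr hβ)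

lemma vbeG_measurable {α : ℝ} (h1 : 1 ≤ α) : Measurable (vbeG α) := by
  have hs : Measurable Real.sign := by
    have : Real.sign = fun r : ℝ => if r < 0 then (-1 : ℝ) else if 0 < r then 1 else 0 := by
      funext r; rfl
    rw [this]
    exact Measurable.ite (measurableSet_lt measurable_id measurable_const) measurable_const
      (Measurable.ite (measurableSet_lt measurable_const measurable_id) measurable_const
        measurable_const)
  exact hs.mul (cont_abs_rpow (by linarith)).measurable

lemma vbeG_abs_le (α x : ℝ) : |vbeG α x| ≤ |x| ^ (α - 1) := by
  rw [vbeG, abs_mul, abs_of_nonneg (Real.rpow_nonneg (abs_nonneg x) _)]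
  rcases Real.sign_apply_eq x with h | h | h <;> rw [h] <;> simp <;> nlinarith [Real.rpow_nonneg (abs_nonneg x) (α - 1)]

lemma rpow_add_le_add_rpow' {a b β : ℝ} (ha : 0 ≤ a) (hb : 0 ≤ b) (h0 : 0 ≤ β) (h1 : β ≤ 1) :
    (a + b) ^ β ≤ a ^ β + b ^ β := by
  have h := NNReal.rpow_add_le_add_rpow a.toNNReal b.toNNReal h0 h1
  have h2 := NNReal.coe_le_coe.2 h
  rw [NNReal.coe_add, NNReal.coe_rpow, NNReal.coe_rpow, NNReal.coe_rpow, NNReal.coe_add,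
    Real.coe_toNNReal a ha, Real.coe_toNNReal b hb] at h2
  exact h2

lemma vbeG_holder {α : ℝ} (h1 : 1 ≤ α) (h2 : α ≤ 2) (u v : ℝ) :
    |vbeG α u - vbeG α v| ≤ 2 * |u - v| ^ (α - 1) := by
  set β := α - 1 with hβdef
  have hβ0 : 0 ≤ β := by linarith
  have hβ1 : β ≤ 1 := by linarith
  -- key: for v ≤ u, vbeG α u - vbeG α v ≤ 2 * (u - v) ^ β
  have key : ∀ u v : ℝ, v ≤ u → vbeG α u - vbeG α v ≤ 2 * (u - v) ^ β := by
    intro u v huv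
    rcases le_or_gt 0 v with hv | hv
    · -- 0 ≤ v ≤ u
      have hu : 0 ≤ u := le_trans hv huv
      rcases eq_or_lt_of_le hv with hv0 | hv0
      · rcases eq_or_lt_of_le hu with hu0 | hu0
        · simp only [vbeG, ← hv0, ← hu0, Real.sign_zero, zero_mul, sub_zero]
          positivity
        · rw [vbeG, vbeG, Real.sign_of_pos hu0, ← hv0, Real.sign_zero, abs_of_pos hu0,
            zero_mul, sub_zero, sub_zero, one_mul]
          nlinarith [Real.rpow_nonneg hu β]
      · rw [vbeG, vbeG, Real.sign_of_pos hv0, Real.sign_of_pos (lt_of_lt_of_le hv0 huv),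
          abs_of_pos hv0, abs_of_pos (lt_of_lt_of_le hv0 huv), one_mul, one_mul]
        have h3 : u ^ β ≤ (u - v) ^ β + v ^ β := by
          have := rpow_add_le_add_rpow' (sub_nonneg.2 huv) hv hβ0 hβ1
          simpa [sub_add_cancel] using this
        nlinarith [Real.rpow_nonneg (sub_nonneg.2 huv) β]
    · rcases le_or_gt u 0 with hu | hu
      · -- v ≤ u ≤ 0
        rw [vbeG, vbeG, Real.sign_of_neg hv, abs_of_neg hv]
        rcases eq_or_lt_of_le hu with hu0 | hu0
        · rw [hu0]
          simp only [Real.sign_zero, zero_mul, neg_one_mul, zero_sub, neg_neg]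
          have h4 : (-v) ^ β ≤ 2 * (0 - v) ^ β := by
            rw [zero_sub]
            nlinarith [Real.rpow_nonneg (neg_nonneg.2 hv.le) β]
          simpa [hu0] using h4
        · rw [Real.sign_of_neg hu0, abs_of_neg hu0, neg_one_mul, neg_one_mul,
            sub_neg_eq_add, neg_add_eq_sub]
          have h3 : (-v) ^ β ≤ (u - v) ^ β + (-u) ^ β := by
            have := rpow_add_le_add_rpow' (sub_nonneg.2 huv) (neg_nonneg.2 hu0.le) hβ0 hβ1
            have he : u - v + -u = -v := by ring
            rw [he] at this; exact this
          nlinarith [Real.rpow_nonneg (sub_nonneg.2 huv) β]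
      · -- v < 0 < u
        rw [vbeG, vbeG, Real.sign_of_neg hv, Real.sign_of_pos hu, abs_of_neg hv,
          abs_of_pos hu, one_mul, neg_one_mul, sub_neg_eq_add]
        have ha : u ^ β ≤ (u - v) ^ β :=
          Real.rpow_le_rpow hu.le (by linarith) hβ0
        have hb : (-v) ^ β ≤ (u - v) ^ β :=
          Real.rpow_le_rpow (by linarith) (by linarith) hβ0
        linarith
  -- monotonicity of vbeG
  have mono : ∀ u v : ℝ, v ≤ u → vbeG α v ≤ vbeG α u := by
    intro u v huv
    rcases le_or_gt 0 v with hv | hv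
    · rcases eq_or_lt_of_le hv with hv0 | hv0
      · rw [vbeG, ← hv0, Real.sign_zero, zero_mul, vbeG]
        rcases eq_or_lt_of_le (le_trans hv huv) with hu0 | hu0
        · rw [← hu0]; simp
        · rw [Real.sign_of_pos hu0]
          positivity
      · rw [vbeG, vbeG, Real.sign_of_pos hv0, Real.sign_of_pos (lt_of_lt_of_le hv0 huv),
          one_mul, one_mul, abs_of_pos hv0, abs_of_pos (lt_of_lt_of_le hv0 huv)]
        exact Real.rpow_le_rpow hv huv hβ0
    · rcases le_or_gt 0 u with hu | hu
      · rw [vbeG, vbeG, Real.sign_of_neg hv]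
        have hle : Real.sign u * |u| ^ β ≥ 0 := by
          rcases eq_or_lt_of_le hu with hu0 | hu0
          · rw [← hu0]; simp
          · rw [Real.sign_of_pos hu0]; positivity
        nlinarith [Real.rpow_nonneg (abs_nonneg v) β]
      · rw [vbeG, vbeG, Real.sign_of_neg hv, Real.sign_of_neg hu, abs_of_neg hv, abs_of_neg hu,
          neg_one_mul, neg_one_mul, neg_le_neg_iff]
        exact Real.rpow_le_rpow (by linarith) (by linarith) hβ0
  rcases le_total v u with h | h
  · rw [abs_of_nonneg (sub_nonneg.2 (mono u v h)), abs_of_nonneg (sub_nonneg.2 h)]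
    exact key u v h
  · rw [abs_of_nonpos (sub_nonpos.2 (mono v u h)), abs_of_nonpos (sub_nonpos.2 h), neg_sub, neg_sub]
    exact key v u h

lemma rpow_split {w : ℝ} (hw : 0 < w) (α : ℝ) : w ^ α = w ^ (α - 1) * w := by
  have h1 : w ^ (α - 1) * w = w ^ (α - 1) * w ^ (1:ℝ) := by rw [Real.rpow_one]
  rw [h1, ← Real.rpow_add hw, sub_add_cancel]

lemma vbeG_continuous {α : ℝ} (hα : 1 < α) : Continuous (vbeG α) := by
  have hβ : (0:ℝ) < α - 1 := by linarith
  rw [continuous_iff_continuousAt]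
  intro x
  rcases lt_trichotomy x 0 with hx | hx | hx
  · have hev : vbeG α =ᶠ[nhds x] fun u => -((-u) ^ (α - 1)) := by
      filter_upwards [eventually_lt_nhds hx] with u hu
      rw [vbeG, Real.sign_of_neg hu, abs_of_neg hu, neg_one_mul]
    refine ContinuousAt.congr ?_ hev.symm
    exact (ContinuousAt.rpow_const (continuous_neg.continuousAt)
      (Or.inr hβ.le)).neg
  · subst hx
    have h0 : vbeG α 0 = 0 := by simp [vbeG]
    rw [ContinuousAt, h0]
    have hb : Continuous (fun u : ℝ => |u| ^ (α - 1)) := cont_abs_rpow hβ.le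
    have hb0 : Filter.Tendsto (fun u : ℝ => |u| ^ (α - 1)) (nhds 0) (nhds 0) := by
      have := hb.continuousAt (x := 0)
      rwa [ContinuousAt, abs_zero, Real.zero_rpow (by linarith)] at this
    apply squeeze_zero_norm _ hb0
    intro t
    exact vbeG_abs_le α t
  · have hev : vbeG α =ᶠ[nhds x] fun u => u ^ (α - 1) := by
      filter_upwards [eventually_gt_nhds hx] with u hu
      rw [vbeG, Real.sign_of_pos hu, abs_of_pos hu, one_mul]
    refine ContinuousAt.congr ?_ hev.symm
    exact ContinuousAt.rpow_const continuousAt_id (Or.inr hβ.le)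

lemma vbeG_hasDerivAt {α : ℝ} (hα : 1 < α) (x : ℝ) :
    HasDerivAt (fun u : ℝ => |u| ^ α) (α * vbeG α x) x := by
  have hβ : (0:ℝ) < α - 1 := by linarith
  rcases lt_trichotomy x 0 with hx | hx | hx
  · have h := (Real.hasDerivAt_rpow_const (x := -x) (p := α)
      (Or.inl (by linarith))).comp x (hasDerivAt_neg x)
    have hev : (fun u : ℝ => |u| ^ α) =ᶠ[nhds x] fun u => (-u) ^ α := by
      filter_upwards [eventually_lt_nhds hx] with u hu
      rw [abs_of_neg hu]
    have h2 := h.congr_of_eventuallyEq hev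
    have : α * (-x) ^ (α - 1) * (-1) = α * vbeG α x := by
      rw [vbeG, Real.sign_of_neg hx, abs_of_neg hx]; ring
    rwa [this] at h2
  · subst hx
    have h0 : α * vbeG α 0 = 0 := by simp [vbeG]
    rw [h0]
    rw [hasDerivAt_iff_isLittleO]
    simp only [abs_zero, Real.zero_rpow (by linarith : α ≠ 0), sub_zero, smul_zero]
    rw [Asymptotics.isLittleO_iff]
    intro c hc
    have hb0 : Filter.Tendsto (fun u : ℝ => |u| ^ (α - 1)) (nhds 0) (nhds 0) := by
      have := (cont_abs_rpow hβ.le).continuousAt (x := 0)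
      rwa [ContinuousAt, abs_zero, Real.zero_rpow (by linarith)] at this
    filter_upwards [hb0.eventually_le_const hc] with u hu
    rcases eq_or_ne u 0 with h | h
    · simp [h, Real.zero_rpow (by linarith : α ≠ 0)]
    · rw [Real.norm_eq_abs, Real.norm_eq_abs, abs_of_nonneg (Real.rpow_nonneg (abs_nonneg u) α),
        rpow_split (abs_pos.2 h) α]
      exact mul_le_mul_of_nonneg_right hu (abs_nonneg u)
  · have h := Real.hasDerivAt_rpow_const (x := x) (p := α) (Or.inl (by linarith))
    have hev : (fun u : ℝ => |u| ^ α) =ᶠ[nhds x] fun u => u ^ α := by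
      filter_upwards [eventually_gt_nhds hx] with u hu
      rw [abs_of_pos hu]
    have h2 := h.congr_of_eventuallyEq hev
    have : α * x ^ (α - 1) = α * vbeG α x := by
      rw [vbeG, Real.sign_of_pos hx, abs_of_pos hx]; ring
    rwa [this] at h2

lemma vbe_abs_sign_le_one (x : ℝ) : |Real.sign x| ≤ 1 := by
  rcases Real.sign_apply_eq x with h | h | h <;> rw [h] <;> norm_num

lemma vbe_key {α : ℝ} (h1 : 1 ≤ α) (h2 : α ≤ 2) (x y : ℝ) :
    |x + y| ^ α ≤ |x| ^ α + α * vbeG α x * y + 2 * |y| ^ α := by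
  rcases eq_or_lt_of_le h1 with heq | hα
  · -- α = 1
    subst heq
    simp only [Real.rpow_one, vbeG, sub_self, Real.rpow_zero, mul_one, one_mul]
    have hsy : -|y| ≤ Real.sign x * y := by
      have := abs_mul (Real.sign x) y
      have h3 : |Real.sign x * y| ≤ |y| := by
        rw [abs_mul]
        nlinarith [vbe_abs_sign_le_one x, abs_nonneg y]
      linarith [neg_abs_le (Real.sign x * y)]
    have := abs_add_le x y
    linarith
  · -- α > 1
    have hβ : (0:ℝ) < α - 1 := by linarith
    set f' : ℝ → ℝ := fun t => α * vbeG α t with hf'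
    have hcont : Continuous f' := continuous_const.mul (vbeG_continuous hα)
    have hInt : ∀ a b : ℝ, IntervalIntegrable f' MeasureTheory.volume a b :=
      fun a b => hcont.intervalIntegrable a b
    have heq : ∫ t in x..(x + y), f' t = |x + y| ^ α - |x| ^ α :=
      intervalIntegral.integral_eq_sub_of_hasDerivAt
        (fun t _ => vbeG_hasDerivAt hα t) (hInt _ _)
    have e1 : ∫ t in x..(x + y), (f' t - f' x) = |x + y| ^ α - |x| ^ α - α * vbeG α x * y := by
      rw [intervalIntegral.integral_sub (hInt _ _) intervalIntegrable_const, heq,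
        intervalIntegral.integral_const]
      simp only [add_sub_cancel_left, smul_eq_mul, hf']
      ring
    -- bound the integral
    have hbnd : ‖∫ t in x..(x + y), (f' t - f' x)‖ ≤ |∫ t in x..(x + y), 2 * α * |t - x| ^ (α - 1)| := by
      apply intervalIntegral.norm_integral_le_abs_of_norm_le
      · filter_upwards with t
        rw [Real.norm_eq_abs, hf']
        have := vbeG_holder h1 h2 t x
        calc |α * vbeG α t - α * vbeG α x| = α * |vbeG α t - vbeG α x| := by
              rw [← mul_sub, abs_mul, abs_of_pos (by linarith : (0:ℝ) < α)]
          _ ≤ α * (2 * |t - x| ^ (α - 1)) := by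
              apply mul_le_mul_of_nonneg_left this (by linarith)
          _ = 2 * α * |t - x| ^ (α - 1) := by ring
      · apply Continuous.intervalIntegrable
        exact (continuous_const.mul ((cont_abs_rpow hβ.le).comp (continuous_id.sub continuous_const)))
    -- compute the bound integral
    have hcomp : ∫ t in x..(x + y), 2 * α * |t - x| ^ (α - 1)
        = ∫ t in (0:ℝ)..y, 2 * α * |t| ^ (α - 1) := by
      have := intervalIntegral.integral_comp_sub_right (a := x) (b := x + y)
        (fun t => 2 * α * |t| ^ (α - 1)) x
      simpa using this
    have hval : |∫ t in (0:ℝ)..y, 2 * α * |t| ^ (α - 1)| = 2 * |y| ^ α := by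
      rcases le_or_gt 0 y with hy | hy
      · have hcongr : ∫ t in (0:ℝ)..y, 2 * α * |t| ^ (α - 1) = ∫ t in (0:ℝ)..y, 2 * α * t ^ (α - 1) := by
          apply intervalIntegral.integral_congr
          intro t ht
          rw [Set.uIcc_of_le hy] at ht
          simp only
          rw [abs_of_nonneg ht.1]
        rw [hcongr, intervalIntegral.integral_const_mul, integral_rpow
          (Or.inl (by linarith)), sub_add_cancel, Real.zero_rpow (by linarith : α ≠ 0)]
        rw [abs_of_nonneg hy, abs_of_nonneg]
        · have hα0 : α ≠ 0 := by linarith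
          field_simp
          ring
        · have h5 : (0:ℝ) ≤ y ^ α := Real.rpow_nonneg hy α
          have h6 : (0:ℝ) < α := by linarith
          have h7 : (0:ℝ) ≤ (y ^ α - 0) / α := div_nonneg (by linarith) h6.le
          nlinarith [mul_nonneg h6.le h7]
      · have hcongr : ∫ t in (0:ℝ)..y, 2 * α * |t| ^ (α - 1) = ∫ t in (0:ℝ)..y, 2 * α * (-t) ^ (α - 1) := by
          apply intervalIntegral.integral_congr
          intro t ht
          rw [Set.uIcc_of_ge hy.le] at ht
          simp only
          rw [abs_of_nonpos ht.2]
        have hneg := intervalIntegral.integral_comp_neg (a := (0:ℝ)) (b := y)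
          (fun t => 2 * α * t ^ (α - 1))
        rw [hcongr, hneg, neg_zero, intervalIntegral.integral_const_mul,
          integral_rpow (Or.inl (by linarith)), sub_add_cancel,
          Real.zero_rpow (by linarith : α ≠ 0), abs_of_neg hy]
        rw [abs_of_nonpos]
        · have hα0 : α ≠ 0 := by linarith
          field_simp
          ring
        · have h5 : (0:ℝ) ≤ (-y) ^ α := Real.rpow_nonneg (by linarith) α
          have h6 : (0:ℝ) < α := by linarith
          have h7 : (0 - (-y) ^ α) / α ≤ 0 :=
            div_nonpos_of_nonpos_of_nonneg (by linarith) h6.le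
          nlinarith [mul_nonpos_of_nonneg_of_nonpos h6.le h7]
    have := e1 ▸ hbnd
    rw [Real.norm_eq_abs] at this
    have h7 := (abs_le.1 (this.trans_eq (hcomp ▸ hval))).2
    linarith

lemma vbe_rpow_le_one_add {γ α u : ℝ} (hγ : 0 ≤ γ) (hγα : γ ≤ α) :
    |u| ^ γ ≤ 1 + |u| ^ α := by
  rcases le_or_gt (|u|) 1 with h | h
  · have := Real.rpow_le_one (abs_nonneg u) h hγ
    nlinarith [Real.rpow_nonneg (abs_nonneg u) α]
  · have := Real.rpow_le_rpow_of_exponent_le h.le hγα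
    linarith

lemma vbe_rpow_add_le {α : ℝ} (hα : 0 ≤ α) (x y : ℝ) :
    |x + y| ^ α ≤ 2 ^ α * (|x| ^ α + |y| ^ α) := by
  have h1 : |x + y| ≤ 2 * max |x| |y| := by
    rcases le_total (|x|) (|y|) with h | h
    · rw [max_eq_right h]; calc |x + y| ≤ |x| + |y| := abs_add_le x y
        _ ≤ 2 * |y| := by linarith
    · rw [max_eq_left h]; calc |x + y| ≤ |x| + |y| := abs_add_le x y
        _ ≤ 2 * |x| := by linarith
  have h2 : |x + y| ^ α ≤ (2 * max |x| |y|) ^ α :=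
    Real.rpow_le_rpow (abs_nonneg _) h1 hα
  have h3 : (2 * max |x| |y|) ^ α = 2 ^ α * (max |x| |y|) ^ α :=
    Real.mul_rpow (by norm_num) (le_max_of_le_left (abs_nonneg x))
  have h4 : (max |x| |y|) ^ α ≤ |x| ^ α + |y| ^ α := by
    rcases le_total (|x|) (|y|) with h | h
    · rw [max_eq_right h]
      nlinarith [Real.rpow_nonneg (abs_nonneg x) α]
    · rw [max_eq_left h]
      nlinarith [Real.rpow_nonneg (abs_nonneg y) α]
  have h5 : (0:ℝ) ≤ 2 ^ α := Real.rpow_nonneg (by norm_num) α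
  nlinarith

lemma vbe_step {Ω : Type*} [MeasurableSpace Ω] (μ : Measure Ω) [IsProbabilityMeasure μ]
    {X Y : Ω → ℝ} (hX : Measurable X) (hY : Measurable Y)
    (hXY : IndepFun X Y μ) (hmY : ∫ ω, Y ω ∂μ = 0)
    {α : ℝ} (h1 : 1 ≤ α) (h2 : α ≤ 2)
    (hiX : Integrable (fun ω => |X ω| ^ α) μ) (hiY : Integrable (fun ω => |Y ω| ^ α) μ) :
    ∫ ω, |X ω + Y ω| ^ α ∂μ ≤ ∫ ω, |X ω| ^ α ∂μ + 2 * ∫ ω, |Y ω| ^ α ∂μ := by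
  have hαpos : (0:ℝ) < α := by linarith
  have habs : ∀ (Z : Ω → ℝ), Measurable Z → Measurable (fun ω => |Z ω| ^ α) := by
    intro Z hZ
    exact ((cont_abs_rpow hαpos.le).measurable).comp hZ
  -- integrability of g(X)
  have hgX : Integrable (fun ω => vbeG α (X ω)) μ := by
    apply Integrable.mono' ((integrable_const (1:ℝ)).add hiX)
      (((vbeG_measurable h1).comp hX).aestronglyMeasurable)
    filter_upwards with ω
    rw [Real.norm_eq_abs]
    exact (vbeG_abs_le α (X ω)).trans (vbe_rpow_le_one_add (by linarith) (by linarith))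
  -- integrability of Y
  have hiY1 : Integrable Y μ := by
    apply Integrable.mono' ((integrable_const (1:ℝ)).add hiY) hY.aestronglyMeasurable
    filter_upwards with ω
    rw [Real.norm_eq_abs]
    have : |Y ω| = |Y ω| ^ (1:ℝ) := (Real.rpow_one _).symm
    rw [this]
    exact vbe_rpow_le_one_add (by norm_num) h1
  -- independence of g(X) and Y
  have hindep2 : IndepFun (fun ω => vbeG α (X ω)) Y μ :=
    hXY.comp (vbeG_measurable h1) measurable_id
  have hmul : Integrable (fun ω => vbeG α (X ω) * Y ω) μ :=
    hindep2.integrable_mul hgX hiY1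
  have hmulint : ∫ ω, vbeG α (X ω) * Y ω ∂μ = 0 := by
    have := hindep2.integral_mul_eq_mul_integral hgX.aestronglyMeasurable hiY1.aestronglyMeasurable
    calc ∫ ω, vbeG α (X ω) * Y ω ∂μ
        = ∫ ω, ((fun ω => vbeG α (X ω)) * Y) ω ∂μ := by rfl
      _ = (∫ ω, vbeG α (X ω) ∂μ) * ∫ ω, Y ω ∂μ := this
      _ = 0 := by rw [hmY, mul_zero]
  -- RHS integrable
  have hRHS : Integrable
      (fun ω => |X ω| ^ α + α * (vbeG α (X ω) * Y ω) + 2 * |Y ω| ^ α) μ :=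
    (hiX.add (hmul.const_mul α)).add (hiY.const_mul 2)
  have hle : ∫ ω, |X ω + Y ω| ^ α ∂μ
      ≤ ∫ ω, (|X ω| ^ α + α * (vbeG α (X ω) * Y ω) + 2 * |Y ω| ^ α) ∂μ := by
    apply integral_mono_of_nonneg
    · filter_upwards with ω
      exact Real.rpow_nonneg (abs_nonneg _) α
    · exact hRHS
    · filter_upwards with ω
      have := vbe_key h1 h2 (X ω) (Y ω)
      calc |X ω + Y ω| ^ α ≤ |X ω| ^ α + α * vbeG α (X ω) * Y ω + 2 * |Y ω| ^ α := this
        _ = |X ω| ^ α + α * (vbeG α (X ω) * Y ω) + 2 * |Y ω| ^ α := by ring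
  have e2 := integral_add (hiX.add (hmul.const_mul α)) (hiY.const_mul 2)
  have e3 := integral_add hiX (hmul.const_mul α)
  simp only [Pi.add_apply] at e2 e3
  rw [e2, e3, integral_const_mul, integral_const_mul, hmulint, mul_zero, add_zero] at hle
  exact hle

theorem stmt_3 {Ω : Type*} [MeasurableSpace Ω] (μ : Measure Ω) [IsProbabilityMeasure μ]
    (n : ℕ) (ξ : Fin n → Ω → ℝ) (hmeas : ∀ i, Measurable (ξ i))
    (hindep : iIndepFun ξ μ)
    (hmean : ∀ i, ∫ ω, ξ i ω ∂μ = 0)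
    (α : ℝ) (h1 : 1 ≤ α) (h2 : α ≤ 2)
    (hint : ∀ i, Integrable (fun ω => |ξ i ω| ^ α) μ) :
    ∫ ω, |∑ i, ξ i ω| ^ α ∂μ ≤ 2 ^ α * ∑ i, ∫ ω, |ξ i ω| ^ α ∂μ := by
  classical
  have hα0 : α ≠ 0 := by linarith
  have key : ∀ s : Finset (Fin n),
      Integrable (fun ω => |∑ i ∈ s, ξ i ω| ^ α) μ ∧
      ∫ ω, |∑ i ∈ s, ξ i ω| ^ α ∂μ ≤ 2 * ∑ i ∈ s, ∫ ω, |ξ i ω| ^ α ∂μ := by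
    intro s
    induction s using Finset.induction_on with
    | empty =>
      constructor
      · simpa [Real.zero_rpow hα0] using (integrable_const (0:ℝ) (μ := μ))
      · simp [Real.zero_rpow hα0]
    | insert _ _ hi =>
      rename_i i s ih
      have hXmeas : Measurable (fun ω => ∑ j ∈ s, ξ j ω) :=
        Finset.measurable_sum s (fun j _ => hmeas j)
      have hindepXY : IndepFun (fun ω => ∑ j ∈ s, ξ j ω) (ξ i) μ := by
        have h := hindep.indepFun_finsetSum_of_notMem hmeas hi
        have h' : (∑ j ∈ s, ξ j) = fun ω => ∑ j ∈ s, ξ j ω := by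
          funext ω; simp [Finset.sum_apply]
        rwa [h'] at h
      have hstep := vbe_step μ hXmeas (hmeas i) hindepXY (hmean i) h1 h2 ih.1 (hint i)
      have hfun : (fun ω => |∑ j ∈ insert i s, ξ j ω| ^ α)
          = fun ω => |(∑ j ∈ s, ξ j ω) + ξ i ω| ^ α := by
        funext ω; rw [Finset.sum_insert hi, add_comm]
      constructor
      · rw [hfun]
        apply Integrable.mono' ((ih.1.add (hint i)).const_mul (2 ^ α))
        · exact (((cont_abs_rpow (by linarith)).measurable).comp
            (hXmeas.add (hmeas i))).aestronglyMeasurable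
        · filter_upwards with ω
          rw [Real.norm_eq_abs, abs_of_nonneg (Real.rpow_nonneg (abs_nonneg _) α)]
          exact vbe_rpow_add_le (by linarith) _ _
      · rw [hfun, Finset.sum_insert hi]
        calc ∫ ω, |(∑ j ∈ s, ξ j ω) + ξ i ω| ^ α ∂μ
            ≤ ∫ ω, |∑ j ∈ s, ξ j ω| ^ α ∂μ + 2 * ∫ ω, |ξ i ω| ^ α ∂μ := hstep
          _ ≤ 2 * ∑ j ∈ s, ∫ ω, |ξ j ω| ^ α ∂μ + 2 * ∫ ω, |ξ i ω| ^ α ∂μ := by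
              linarith [ih.2]
          _ = 2 * (∫ ω, |ξ i ω| ^ α ∂μ + ∑ j ∈ s, ∫ ω, |ξ j ω| ^ α ∂μ) := by ring
  obtain ⟨_, hle⟩ := key Finset.univ
  have hsum_nonneg : 0 ≤ ∑ i, ∫ ω, |ξ i ω| ^ α ∂μ :=
    Finset.sum_nonneg fun i _ => integral_nonneg fun ω => Real.rpow_nonneg (abs_nonneg _) α
  have h2α : (2:ℝ) ≤ 2 ^ α := by
    calc (2:ℝ) = 2 ^ (1:ℝ) := (Real.rpow_one 2).symm
      _ ≤ 2 ^ α := Real.rpow_le_rpow_of_exponent_le (by norm_num) h1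
  calc ∫ ω, |∑ i, ξ i ω| ^ α ∂μ ≤ 2 * ∑ i, ∫ ω, |ξ i ω| ^ α ∂μ := hle
    _ ≤ 2 ^ α * ∑ i, ∫ ω, |ξ i ω| ^ α ∂μ := mul_le_mul_of_nonneg_right h2α hsum_nonneg
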